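/- Let d ∈ ℕ, let φ_1, ..., φ_d : ℂ → ℂ be 1-Lipschitz functions, and let A ∈ M_d(ℂ). Define f : U(d) → ℂ by f(U) = Σ_{k=1}^{d} φ_k(e_k* U* A U e_k). Then f is Lipschitz with constant at most 2‖A‖_HS with respect to the geodesic (Riemannian) distance on U(d) induced by the Hilbert–Schmidt metric on the tangent spaces. -/

import Mathlib

open scoped BigOperators Matrix

/-- The Hilbert–Schmidt (Frobenius) norm of a complex matrix. -/
noncomputable def frobNorm {d : ℕ} (A : Matrix (Fin d) (Fin d) ℂ) : ℝ :=
  Real.sqrt (∑ i, ∑ j, ‖A i j‖ ^ 2)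

/-- The geodesic (Riemannian) distance on the unitary group `U(d)` induced by the
Hilbert–Schmidt metric on the tangent spaces: the infimum of lengths of smooth curves inside
`U(d)` joining the two points. -/
noncomputable def geoDist {d : ℕ} (U V : Matrix.unitaryGroup (Fin d) ℂ) : ℝ :=
  sInf {L : ℝ | ∃ γ γ' : ℝ → Matrix (Fin d) (Fin d) ℂ,
    (∀ (i j : Fin d) (t : ℝ), HasDerivAt (fun s => γ s i j) (γ' t i j) t) ∧
    (∀ i j : Fin d, Continuous fun t => γ' t i j) ∧
    (∀ t ∈ Set.Icc (0 : ℝ) 1, γ t ∈ Matrix.unitaryGroup (Fin d) ℂ) ∧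
    γ 0 = (U : Matrix (Fin d) (Fin d) ℂ) ∧ γ 1 = (V : Matrix (Fin d) (Fin d) ℂ) ∧
    L = ∫ t in (0 : ℝ)..1, frobNorm (γ' t)}

namespace Stmt8Aux
open Matrix
variable {d : ℕ}

open Matrix
variable {d : ℕ}

lemma frobNorm_nonneg (A : Matrix (Fin d) (Fin d) ℂ) : 0 ≤ frobNorm A := Real.sqrt_nonneg _

lemma single_dot (M : Matrix (Fin d) (Fin d) ℂ) (k : Fin d) :
    star (Pi.single k 1 : Fin d → ℂ) ⬝ᵥ (M *ᵥ (Pi.single k 1 : Fin d → ℂ)) = M k k := by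
  simp [dotProduct, Matrix.mulVec, Pi.single_apply, apply_ite, mul_comm]

lemma row_sq (M B : Matrix (Fin d) (Fin d) ℂ) (hB : B * star B = 1) (i : Fin d) :
    ∑ k, ‖(M * B) i k‖ ^ 2 = ∑ k, ‖M i k‖ ^ 2 := by
  have h1 : ∀ X : Matrix (Fin d) (Fin d) ℂ,
      (X * star X) i i = ((∑ k, ‖X i k‖ ^ 2 : ℝ) : ℂ) := by
    intro X
    rw [Matrix.mul_apply]
    push_cast
    refine Finset.sum_congr rfl fun k _ => ?_
    rw [Matrix.star_apply, Complex.star_def, Complex.mul_conj, Complex.normSq_eq_norm_sq]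
    push_cast
    ring
  have h2 : M * B * star (M * B) = M * star M := by
    rw [StarMul.star_mul, show M * B * (star B * star M) = M * (B * star B) * star M by
      noncomm_ring, hB, mul_one]
  have := (h1 (M * B)).symm.trans (by rw [h2, h1 M])
  exact_mod_cast this

lemma frobNorm_mul_unitary (M B : Matrix (Fin d) (Fin d) ℂ) (hB : B * star B = 1) :
    frobNorm (M * B) = frobNorm M := by
  unfold frobNorm
  congr 1
  exact Finset.sum_congr rfl fun i _ => row_sq M B hB i

lemma frobNorm_star (M : Matrix (Fin d) (Fin d) ℂ) : frobNorm (star M) = frobNorm M := by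
  unfold frobNorm
  rw [Finset.sum_comm]
  congr 1
  refine Finset.sum_congr rfl fun i _ => Finset.sum_congr rfl fun j _ => ?_
  rw [Matrix.star_apply, norm_star]

lemma cs_sum (X Y : Matrix (Fin d) (Fin d) ℂ) :
    ∑ k, ∑ i, ‖X i k‖ * ‖Y i k‖ ≤ frobNorm X * frobNorm Y := by
  have hnn : (0:ℝ) ≤ ∑ k, ∑ i, ‖X i k‖ * ‖Y i k‖ := by positivity
  have hP : ∑ k, ∑ i, ‖X i k‖ * ‖Y i k‖
      = ∑ p : Fin d × Fin d, ‖X p.2 p.1‖ * ‖Y p.2 p.1‖ := by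
    rw [Fintype.sum_prod_type]
  have key := Finset.sum_mul_sq_le_sq_mul_sq Finset.univ
    (fun p : Fin d × Fin d => ‖X p.2 p.1‖) (fun p : Fin d × Fin d => ‖Y p.2 p.1‖)
  have h1 : ∑ p : Fin d × Fin d, ‖X p.2 p.1‖ ^ 2 = ∑ i, ∑ j, ‖X i j‖ ^ 2 := by
    rw [Fintype.sum_prod_type, Finset.sum_comm]
  have h2 : ∑ p : Fin d × Fin d, ‖Y p.2 p.1‖ ^ 2 = ∑ i, ∑ j, ‖Y i j‖ ^ 2 := by
    rw [Fintype.sum_prod_type, Finset.sum_comm]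
  calc ∑ k, ∑ i, ‖X i k‖ * ‖Y i k‖
      = Real.sqrt ((∑ k, ∑ i, ‖X i k‖ * ‖Y i k‖) ^ 2) := (Real.sqrt_sq hnn).symm
    _ ≤ Real.sqrt ((∑ p : Fin d × Fin d, ‖X p.2 p.1‖ ^ 2) *
        ∑ p : Fin d × Fin d, ‖Y p.2 p.1‖ ^ 2) := by
        apply Real.sqrt_le_sqrt; rw [hP]; exact key
    _ = frobNorm X * frobNorm Y := by
        rw [Real.sqrt_mul (by positivity), frobNorm, frobNorm, h1, h2]

lemma diag_mul (C M : Matrix (Fin d) (Fin d) ℂ) (k : Fin d) :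
    (star C * M) k k = ∑ i, star (C i k) * M i k := by
  rw [Matrix.mul_apply]
  exact Finset.sum_congr rfl fun i _ => by rw [Matrix.star_apply]

lemma diag_mul_mul (A B C : Matrix (Fin d) (Fin d) ℂ) (k : Fin d) :
    (star C * A * B) k k = ∑ i, ∑ j, star (C i k) * A i j * B j k := by
  rw [Matrix.mul_assoc, diag_mul]
  refine Finset.sum_congr rfl fun i _ => ?_
  rw [Matrix.mul_apply, Finset.mul_sum]
  exact Finset.sum_congr rfl fun j _ => by ring

lemma key_bound (A B C : Matrix (Fin d) (Fin d) ℂ) (hB : B ∈ Matrix.unitaryGroup (Fin d) ℂ) :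
    ∑ k, ‖(star C * A * B) k k + (star B * A * C) k k‖ ≤ 2 * frobNorm A * frobNorm C := by
  have hB1 : B * star B = 1 := (Matrix.mem_unitaryGroup_iff.mp hB)
  have b1 : ∑ k, ‖(star C * A * B) k k‖ ≤ frobNorm C * frobNorm (A * B) := by
    calc ∑ k, ‖(star C * A * B) k k‖
        ≤ ∑ k, ∑ i, ‖C i k‖ * ‖(A * B) i k‖ := by
          refine Finset.sum_le_sum fun k _ => ?_
          rw [Matrix.mul_assoc, diag_mul]
          refine (norm_sum_le _ _).trans (Finset.sum_le_sum fun i _ => ?_)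
          rw [norm_mul, norm_star]
      _ ≤ frobNorm C * frobNorm (A * B) := cs_sum C (A * B)
  have b2 : ∑ k, ‖(star B * A * C) k k‖ ≤ frobNorm (star A * B) * frobNorm C := by
    have hrw : star B * A = star (star A * B) := by rw [StarMul.star_mul, star_star]
    calc ∑ k, ‖(star B * A * C) k k‖
        ≤ ∑ k, ∑ i, ‖(star A * B) i k‖ * ‖C i k‖ := by
          refine Finset.sum_le_sum fun k _ => ?_
          rw [hrw, diag_mul]
          refine (norm_sum_le _ _).trans (Finset.sum_le_sum fun i _ => ?_)
          rw [norm_mul, norm_star]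
      _ ≤ frobNorm (star A * B) * frobNorm C := cs_sum _ C
  have hAB : frobNorm (A * B) = frobNorm A := frobNorm_mul_unitary A B hB1
  have hAB' : frobNorm (star A * B) = frobNorm A := by
    rw [frobNorm_mul_unitary (star A) B hB1, frobNorm_star]
  calc ∑ k, ‖(star C * A * B) k k + (star B * A * C) k k‖
      ≤ ∑ k, (‖(star C * A * B) k k‖ + ‖(star B * A * C) k k‖) :=
        Finset.sum_le_sum fun k _ => norm_add_le _ _
    _ = ∑ k, ‖(star C * A * B) k k‖ + ∑ k, ‖(star B * A * C) k k‖ :=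
        Finset.sum_add_distrib
    _ ≤ frobNorm C * frobNorm (A * B) + frobNorm (star A * B) * frobNorm C :=
        add_le_add b1 b2
    _ = 2 * frobNorm A * frobNorm C := by rw [hAB, hAB']; ring

lemma hasDerivAt_diag (A : Matrix (Fin d) (Fin d) ℂ) (γ γ' : ℝ → Matrix (Fin d) (Fin d) ℂ)
    (h : ∀ (i j : Fin d) (t : ℝ), HasDerivAt (fun s => γ s i j) (γ' t i j) t)
    (k : Fin d) (t : ℝ) :
    HasDerivAt (fun s => (star (γ s) * A * γ s) k k)
      ((star (γ' t) * A * γ t) k k + (star (γ t) * A * γ' t) k k) t := by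
  have e1 : (fun s => (star (γ s) * A * γ s) k k)
      = fun s => ∑ i, ∑ j, star (γ s i k) * A i j * γ s j k :=
    funext fun s => diag_mul_mul A (γ s) (γ s) k
  rw [e1, diag_mul_mul, diag_mul_mul]
  have H : ∀ i j : Fin d, HasDerivAt (fun s => star (γ s i k) * A i j * γ s j k)
      (star (γ' t i k) * A i j * γ t j k + star (γ t i k) * A i j * γ' t j k) t := by
    intro i j
    exact (((h i k t).star.mul_const (A i j)).mul (h j k t))
  have := HasDerivAt.fun_sum (fun i (_ : i ∈ Finset.univ) =>
    HasDerivAt.fun_sum (fun j (_ : j ∈ Finset.univ) => H i j))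
  simpa [Finset.sum_add_distrib] using this
lemma curve_bound (φ : Fin d → ℂ → ℂ) (hφ : ∀ k, LipschitzWith 1 (φ k))
    (A : Matrix (Fin d) (Fin d) ℂ) (γ γ' : ℝ → Matrix (Fin d) (Fin d) ℂ)
    (hd : ∀ (i j : Fin d) (t : ℝ), HasDerivAt (fun s => γ s i j) (γ' t i j) t)
    (hc : ∀ i j : Fin d, Continuous fun t => γ' t i j)
    (hm : ∀ t ∈ Set.Icc (0 : ℝ) 1, γ t ∈ Matrix.unitaryGroup (Fin d) ℂ) :
    ‖(∑ k, φ k ((star (γ 0) * A * γ 0) k k)) - ∑ k, φ k ((star (γ 1) * A * γ 1) k k)‖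
      ≤ 2 * frobNorm A * ∫ t in (0:ℝ)..1, frobNorm (γ' t) := by
  set Q : Fin d → ℝ → ℂ := fun k t => (star (γ t) * A * γ t) k k with hQ
  set D : Fin d → ℝ → ℂ :=
    fun k t => (star (γ' t) * A * γ t) k k + (star (γ t) * A * γ' t) k k with hD
  have hQD : ∀ k t, HasDerivAt (Q k) (D k t) t := fun k t => hasDerivAt_diag A γ γ' hd k t
  have hγc : ∀ i j : Fin d, Continuous fun t => γ t i j := fun i j =>
    continuous_iff_continuousAt.mpr fun t => (hd i j t).continuousAt
  have hDc : ∀ k, Continuous (D k) := by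
    intro k
    have e : D k = fun t => (∑ i, ∑ j, star (γ' t i k) * A i j * γ t j k)
        + ∑ i, ∑ j, star (γ t i k) * A i j * γ' t j k :=
      funext fun t => by simp only [hD]; rw [diag_mul_mul, diag_mul_mul]
    rw [e]
    exact (continuous_finset_sum _ fun i _ => continuous_finset_sum _ fun j _ =>
        (((hc i k).star.mul continuous_const).mul (hγc j k))).add
      (continuous_finset_sum _ fun i _ => continuous_finset_sum _ fun j _ =>
        (((hγc i k).star.mul continuous_const).mul (hc j k)))
  have hFTC : ∀ k, ∫ t in (0:ℝ)..1, D k t = Q k 1 - Q k 0 := fun k =>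
    intervalIntegral.integral_eq_sub_of_hasDerivAt (fun t _ => hQD k t)
      ((hDc k).intervalIntegrable 0 1)
  have hfrobc : Continuous fun t => frobNorm (γ' t) := by
    apply Real.continuous_sqrt.comp
    exact continuous_finset_sum _ fun i _ => continuous_finset_sum _ fun j _ =>
      ((hc i j).norm.pow 2)
  calc ‖(∑ k, φ k (Q k 0)) - ∑ k, φ k (Q k 1)‖
      = ‖∑ k, (φ k (Q k 0) - φ k (Q k 1))‖ := by rw [Finset.sum_sub_distrib]
    _ ≤ ∑ k, ‖φ k (Q k 0) - φ k (Q k 1)‖ := norm_sum_le _ _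
    _ ≤ ∑ k, ‖Q k 0 - Q k 1‖ := by
        refine Finset.sum_le_sum fun k _ => ?_
        have := (hφ k).dist_le_mul (Q k 0) (Q k 1)
        simpa [dist_eq_norm] using this
    _ = ∑ k, ‖∫ t in (0:ℝ)..1, D k t‖ := by
        refine Finset.sum_congr rfl fun k _ => ?_
        rw [hFTC k, norm_sub_rev]
    _ ≤ ∑ k, ∫ t in (0:ℝ)..1, ‖D k t‖ := by
        refine Finset.sum_le_sum fun k _ => ?_
        exact intervalIntegral.norm_integral_le_integral_norm zero_le_one
    _ = ∫ t in (0:ℝ)..1, ∑ k, ‖D k t‖ := by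
        rw [intervalIntegral.integral_finset_sum]
        exact fun k _ => ((hDc k).norm.intervalIntegrable 0 1)
    _ ≤ ∫ t in (0:ℝ)..1, 2 * frobNorm A * frobNorm (γ' t) := by
        refine intervalIntegral.integral_mono_on zero_le_one ?_ ?_ ?_
        · exact (continuous_finset_sum _ fun k _ => (hDc k).norm).intervalIntegrable 0 1
        · exact (continuous_const.mul hfrobc).intervalIntegrable 0 1
        · exact fun t ht => key_bound A (γ t) (γ' t) (hm t ht)
    _ = 2 * frobNorm A * ∫ t in (0:ℝ)..1, frobNorm (γ' t) := by
        rw [← intervalIntegral.integral_const_mul]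


lemma le_of_forall_mem (c a : ℝ) (S : Set ℝ) (ha : 0 ≤ a) (hne : S.Nonempty)
    (h : ∀ L ∈ S, c ≤ 2 * a * L) : c ≤ 2 * a * sInf S := by
  rcases eq_or_lt_of_le ha with h0 | h0
  · obtain ⟨L, hL⟩ := hne
    have hc := h L hL
    rw [← h0] at hc ⊢
    simpa using hc
  · have hpos : (0:ℝ) < 2 * a := by linarith
    have h1 : ∀ L ∈ S, c / (2 * a) ≤ L := fun L hL => by
      rw [div_le_iff₀ hpos]
      have := h L hL
      linarith [h L hL]
    have h2 := le_csInf hne h1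
    rw [div_le_iff₀ hpos] at h2
    linarith
section explog
open scoped Matrix.Norms.L2Operator
variable {d : ℕ}

noncomputable local instance : NormedAlgebra ℝ (Matrix (Fin d) (Fin d) ℂ) where
  norm_smul_le r M := by
    have h : r • M = (r : ℂ) • M := by
      ext i j; simp [Matrix.smul_apply, Complex.real_smul]
    rw [h, norm_smul, Complex.norm_real]

noncomputable local instance : CStarAlgebra (Matrix (Fin d) (Fin d) ℂ) where
  toNormedRing := inferInstance
  toStarRing := inferInstance
  toCompleteSpace := inferInstance
  toCStarRing := inferInstance
  toNormedAlgebra := inferInstance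
  toStarModule := inferInstance

local instance : FiniteDimensional ℝ (Matrix (Fin d) (Fin d) ℂ) :=
  Module.Finite.trans ℂ _

lemma exists_skew_log (W : Matrix (Fin d) (Fin d) ℂ) (hW : W ∈ Matrix.unitaryGroup (Fin d) ℂ) :
    ∃ K : Matrix (Fin d) (Fin d) ℂ, star K = -K ∧ NormedSpace.exp K = W := by
  have hWu : W ∈ unitary (Matrix (Fin d) (Fin d) ℂ) := hW
  have hnormal : IsStarNormal W := ⟨by
    rw [Commute, SemiconjBy, Unitary.star_mul_self_of_mem hWu, Unitary.mul_star_self_of_mem hWu]⟩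
  have hsub : spectrum ℂ W ⊆ Metric.sphere 0 1 := spectrum.subset_circle_of_unitary hWu
  have habs : ∀ z ∈ spectrum ℂ W, ‖z‖ = 1 := by
    intro z hz
    have := hsub hz
    rw [Metric.mem_sphere, dist_zero_right] at this
    exact this
  -- choose b on the circle, not in the spectrum
  obtain ⟨θ, hθmem, hθ⟩ : ∃ θ ∈ Set.Ico (0:ℝ) (2 * Real.pi),
      Complex.exp (θ * Complex.I) ∉ spectrum ℂ W := by
    by_contra hcon
    push_neg at hcon
    have hinj : Set.InjOn (fun θ : ℝ => Complex.exp (θ * Complex.I))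
        (Set.Ico 0 (2 * Real.pi)) := by
      intro x hx y hy hxy
      obtain ⟨n, hn⟩ := Complex.exp_eq_exp_iff_exists_int.mp hxy
      have him := congrArg Complex.im hn
      simp [Complex.add_im, Complex.mul_im] at him
      -- him : x = y + n * (2 * π)
      have hpi := Real.pi_pos
      have hnabs : |(n:ℝ)| < 1 := by
        rw [abs_lt]
        constructor <;> nlinarith [hx.1, hx.2, hy.1, hy.2]
      have : n = 0 := by
        have h' : |n| < 1 := by exact_mod_cast hnabs
        rcases abs_lt.mp h' with ⟨h1, h2⟩
        omega
      rw [this] at him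
      simpa using him
    have himg : (fun θ : ℝ => Complex.exp (θ * Complex.I)) '' Set.Ico 0 (2 * Real.pi)
        ⊆ spectrum ℂ W := by
      rintro _ ⟨θ, hθ, rfl⟩; exact hcon θ hθ
    have hfin : (Set.Ico (0:ℝ) (2 * Real.pi)).Finite :=
      Set.Finite.of_finite_image ((Matrix.finite_spectrum W).subset himg) hinj
    exact Set.Ico_infinite (by positivity) hfin
  set b : ℂ := Complex.exp (θ * Complex.I) with hbdef
  have hb1 : ‖b‖ = 1 := by simp [hbdef, Complex.norm_exp]
  have hb0 : b ≠ 0 := Complex.exp_ne_zero _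
  set f : ℂ → ℂ := fun z => Complex.log (-z / b) + Complex.log (-b) with hfdef
  have hslit : ∀ z ∈ spectrum ℂ W, -z / b ∈ Complex.slitPlane := by
    intro z hz
    by_contra hns
    rw [Complex.mem_slitPlane_iff] at hns
    push_neg at hns
    set w : ℂ := -z / b with hw
    have habsw : ‖w‖ = 1 := by
      rw [hw, norm_div, norm_neg, habs z hz, hb1, div_one]
    have hwre : w = (w.re : ℂ) := Complex.ext rfl (by simpa using hns.2)
    have : |w.re| = 1 := by rw [hwre, Complex.norm_real, Real.norm_eq_abs] at habsw; exact habsw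
    have hwm1 : w = -1 := by
      rw [hwre]
      have : w.re = -1 := by cases abs_cases w.re <;> [linarith [hns.1]; linarith]
      rw [this]; norm_num
    have : z = b := by
      rw [hw, div_eq_iff hb0] at hwm1
      linear_combination -hwm1
    exact hθ (this ▸ hz)
  have hfcont : ContinuousOn f (spectrum ℂ W) := by
    intro z hz
    have h1 : ContinuousAt (fun z : ℂ => Complex.log (-z / b)) z :=
      ContinuousAt.comp (g := Complex.log) (f := fun z : ℂ => -z / b)
        (continuousAt_clog (hslit z hz)) (by fun_prop)
    exact ((h1.add continuousAt_const).continuousWithinAt)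
  have hre0 : ∀ z ∈ spectrum ℂ W, (f z).re = 0 := by
    intro z hz
    have h1 : ‖-z / b‖ = 1 := by
      rw [norm_div, norm_neg, habs z hz, hb1, div_one]
    have h2 : ‖-b‖ = 1 := by rw [norm_neg, hb1]
    rw [hfdef]
    simp only [Complex.add_re, Complex.log_re, h1, h2, Real.log_one, add_zero]
  refine ⟨cfc f W, ?_, ?_⟩
  · rw [← cfc_star]
    rw [cfc_congr (g := fun z => -(f z)) (fun z hz => ?_), cfc_neg f W]
    have h0 := hre0 z hz
    apply Complex.ext
    · simp only [Complex.star_def, Complex.conj_re, Complex.neg_re, h0, neg_zero]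
    · simp
  · have hK : IsStarNormal (cfc f W) := cfc_predicate f W
    rw [← CFC.complex_exp_eq_normedSpace_exp (a := cfc f W) hK]
    rw [← cfc_comp Complex.exp f W hnormal (Complex.continuous_exp.continuousOn) hfcont]
    have : (spectrum ℂ W).EqOn (Complex.exp ∘ f) id := by
      intro z hz
      have hz0 : z ≠ 0 := by
        intro h; rw [h] at hz; have := habs 0 hz; simpa using this
      have hzb : -z / b ≠ 0 := by
        simp [div_eq_zero_iff, neg_eq_zero, hz0, hb0]
      simp only [Function.comp_apply, hfdef, id_eq]
      rw [Complex.exp_add, Complex.exp_log hzb, Complex.exp_log (neg_ne_zero.mpr hb0)]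
      field_simp
    rw [cfc_congr this, cfc_id ℂ W hnormal]


lemma clm_hasDerivAt {g : ℝ → Matrix (Fin d) (Fin d) ℂ} {g' : Matrix (Fin d) (Fin d) ℂ} {t : ℝ}
    (L : Matrix (Fin d) (Fin d) ℂ →L[ℝ] ℂ) (h : HasDerivAt g g' t) :
    HasDerivAt (fun s => L (g s)) (L g') t := by
  exact L.hasFDerivAt.comp_hasDerivAt t h

noncomputable def entryCLM (U : Matrix (Fin d) (Fin d) ℂ) (i j : Fin d) :
    Matrix (Fin d) (Fin d) ℂ →L[ℝ] ℂ :=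
  LinearMap.toContinuousLinearMap
    { toFun := fun M => (U * M) i j
      map_add' := by intro M N; simp [Matrix.mul_add]
      map_smul' := by intro r M; simp [Matrix.mul_smul] }

@[simp] lemma entryCLM_apply (U M : Matrix (Fin d) (Fin d) ℂ) (i j : Fin d) :
    entryCLM U i j M = (U * M) i j := rfl

lemma exists_curve (U V : Matrix.unitaryGroup (Fin d) ℂ) :
    ∃ γ γ' : ℝ → Matrix (Fin d) (Fin d) ℂ,
      (∀ (i j : Fin d) (t : ℝ), HasDerivAt (fun s => γ s i j) (γ' t i j) t) ∧
      (∀ i j : Fin d, Continuous fun t => γ' t i j) ∧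
      (∀ t ∈ Set.Icc (0 : ℝ) 1, γ t ∈ Matrix.unitaryGroup (Fin d) ℂ) ∧
      γ 0 = (U : Matrix (Fin d) (Fin d) ℂ) ∧ γ 1 = (V : Matrix (Fin d) (Fin d) ℂ) := by
  have hWmem : star (U : Matrix (Fin d) (Fin d) ℂ) * (V : Matrix (Fin d) (Fin d) ℂ)
      ∈ Matrix.unitaryGroup (Fin d) ℂ :=
    mul_mem (Unitary.star_mem U.2) V.2
  obtain ⟨K, hK, hexp⟩ := exists_skew_log _ hWmem
  have hexpcont : Continuous fun t : ℝ => NormedSpace.exp (t • K) :=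
    continuous_iff_continuousAt.mpr fun t => (hasDerivAt_exp_smul_const (𝕂 := ℝ) K t).continuousAt
  refine ⟨fun t => (U : Matrix (Fin d) (Fin d) ℂ) * NormedSpace.exp (t • K),
    fun t => (U : Matrix (Fin d) (Fin d) ℂ) * (NormedSpace.exp (t • K) * K),
    ?_, ?_, ?_, ?_, ?_⟩
  · intro i j t
    exact clm_hasDerivAt (entryCLM U i j) (hasDerivAt_exp_smul_const (𝕂 := ℝ) K t)
  · intro i j
    have : Continuous fun t : ℝ => NormedSpace.exp (t • K) * K :=
      hexpcont.mul continuous_const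
    exact (entryCLM U i j).continuous.comp this
  · intro t _
    have hskew : t • K ∈ skewAdjoint (Matrix (Fin d) (Fin d) ℂ) := by
      rw [skewAdjoint.mem_iff]
      have hs : star (t • K) = t • star K := by
        ext i j
        simp [Matrix.star_apply, Matrix.smul_apply, star_smul]
      rw [hs, hK, smul_neg]
    let +nondep : NormedAlgebra ℚ (Matrix (Fin d) (Fin d) ℂ) := .restrictScalars ℚ ℂ _
    have hu : NormedSpace.exp (t • K) ∈ unitary (Matrix (Fin d) (Fin d) ℂ) :=
      NormedSpace.exp_mem_unitary_of_mem_skewAdjoint hskew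
    exact mul_mem U.2 hu
  · simp [NormedSpace.exp_zero]
  · show (U : Matrix (Fin d) (Fin d) ℂ) * NormedSpace.exp ((1:ℝ) • K) = _
    rw [one_smul, hexp, ← mul_assoc,
      (Unitary.mem_iff.mp U.2).2, one_mul]

end explog

end Stmt8Aux
/-- If `φ_1, ..., φ_d : ℂ → ℂ` are 1-Lipschitz and `A ∈ M_d(ℂ)`, then
`f(U) = Σ_k φ_k(e_k* U* A U e_k)` is `2‖A‖_HS`-Lipschitz on `U(d)` with respect to the geodesic
distance induced by the Hilbert–Schmidt metric. -/

theorem stmt8 (d : ℕ) (φ : Fin d → ℂ → ℂ) (hφ : ∀ k, LipschitzWith 1 (φ k))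
    (A : Matrix (Fin d) (Fin d) ℂ) :
    ∀ U V : Matrix.unitaryGroup (Fin d) ℂ,
      ‖
          ((∑ k : Fin d, φ k (star (Pi.single k 1 : Fin d → ℂ) ⬝ᵥ
              ((star (U : Matrix (Fin d) (Fin d) ℂ) * A * (U : Matrix (Fin d) (Fin d) ℂ)) *ᵥ (Pi.single k 1 : Fin d → ℂ)))) -
            ∑ k : Fin d, φ k (star (Pi.single k 1 : Fin d → ℂ) ⬝ᵥ
              ((star (V : Matrix (Fin d) (Fin d) ℂ) * A * (V : Matrix (Fin d) (Fin d) ℂ)) *ᵥ (Pi.single k 1 : Fin d → ℂ))))‖ ≤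
        2 * frobNorm A * geoDist U V := by
  intro U V
  simp only [Stmt8Aux.single_dot]
  unfold geoDist
  obtain ⟨γ₀, γ₀', hd0, hc0, hm0, h00, h01⟩ := Stmt8Aux.exists_curve U V
  refine Stmt8Aux.le_of_forall_mem _ _ _ (Stmt8Aux.frobNorm_nonneg A)
    ⟨_, γ₀, γ₀', hd0, hc0, hm0, h00, h01, rfl⟩ ?_
  rintro L ⟨γ, γ', hd, hc, hm, h0, h1, rfl⟩
  have hcb := Stmt8Aux.curve_bound φ hφ A γ γ' hd hc hm
  rw [h0, h1] at hcb
  exact hcb
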